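/- Let U : ℝ × [0,∞) → ℝ be continuously differentiable with U(x,0) = 0 for all x, ∂_y U ∈ L²(ℝ × (0,∞)), and let c : ℝ × (0,∞) → ℝ satisfy ∫_0^∞ z · sup_x |c(x,z)|² dz < ∞. Let ε > 0 and V ∈ L²(ℝ × (0,∞)). Then |ε^{-1/2} ∫_ℝ ∫_0^∞ U(x,y) c(x, y/√ε) V(x,y) dy dx| ≤ ‖∂_y U‖_{L²} · ‖V‖_{L²} · (∫_0^∞ z · sup_x |c(x,z)|² dz)^{1/2}. -/

import Mathlib

open MeasureTheory

/-- Cauchy–Schwarz for integrals of nonnegative functions. -/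
lemma bve_cs {α : Type*} [MeasurableSpace α] {μ : Measure α} {f g : α → ℝ}
    (hfm : AEStronglyMeasurable f μ) (hgm : AEStronglyMeasurable g μ)
    (hf0 : 0 ≤ᵐ[μ] f) (hg0 : 0 ≤ᵐ[μ] g)
    (hf2 : Integrable (fun a => f a ^ 2) μ) (hg2 : Integrable (fun a => g a ^ 2) μ) :
    ∫ a, f a * g a ∂μ ≤ Real.sqrt (∫ a, f a ^ 2 ∂μ) * Real.sqrt (∫ a, g a ^ 2 ∂μ) := by
  have hpq : (2 : ℝ).HolderConjugate 2 := Real.HolderConjugate.two_two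
  have hfp : MemLp f (ENNReal.ofReal 2) μ := by
    rw [show ENNReal.ofReal 2 = 2 by norm_num]
    exact (memLp_two_iff_integrable_sq hfm).mpr hf2
  have hgp : MemLp g (ENNReal.ofReal 2) μ := by
    rw [show ENNReal.ofReal 2 = 2 by norm_num]
    exact (memLp_two_iff_integrable_sq hgm).mpr hg2
  have h := integral_mul_le_Lp_mul_Lq_of_nonneg hpq hf0 hg0 hfp hgp
  simp only [Real.rpow_two] at h
  calc ∫ a, f a * g a ∂μ ≤ (∫ a, f a ^ (2:ℝ) ∂μ) ^ ((1:ℝ)/2) * (∫ a, g a ^ (2:ℝ) ∂μ) ^ ((1:ℝ)/2) := by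
        simpa [Real.rpow_two] using h
    _ = Real.sqrt (∫ a, f a ^ 2 ∂μ) * Real.sqrt (∫ a, g a ^ 2 ∂μ) := by
        rw [Real.sqrt_eq_rpow, Real.sqrt_eq_rpow]
        norm_num [Real.rpow_two]

/-- Product of two L² functions is integrable. -/
lemma bve_mul_int {α : Type*} [MeasurableSpace α] {μ : Measure α} {f g : α → ℝ}
    (hfm : AEStronglyMeasurable f μ) (hgm : AEStronglyMeasurable g μ)
    (hf2 : Integrable (fun a => f a ^ 2) μ) (hg2 : Integrable (fun a => g a ^ 2) μ) :
    Integrable (fun a => f a * g a) μ := by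
  refine Integrable.mono' (((hf2.add hg2).div_const 2)) (hfm.mul hgm) ?_
  filter_upwards with a
  have : |f a * g a| ≤ (f a ^ 2 + g a ^ 2) / 2 := by
    rw [abs_mul]
    nlinarith [sq_nonneg (|f a| - |g a|), sq_abs (f a), sq_abs (g a),
      abs_nonneg (f a), abs_nonneg (g a)]
  rw [Real.norm_eq_abs]
  exact this

section Aux
variable {U c V : ℝ → ℝ → ℝ} {dU : ℝ → ℝ → ℝ} {g : ℝ → ℝ} {ε : ℝ}

lemma bve_aux (U c V : ℝ → ℝ → ℝ) (dU : ℝ → ℝ → ℝ) (g : ℝ → ℝ) (ε : ℝ) (hε : 0 < ε)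
    (hderiv : ∀ x y, HasDerivAt (fun y' => U x y') (dU x y) y)
    (hdUcont : Continuous fun p : ℝ × ℝ => dU p.1 p.2)
    (hUcont : Continuous fun p : ℝ × ℝ => U p.1 p.2)
    (hU0 : ∀ x, U x 0 = 0)
    (hgc : ∀ x z, (c x z) ^ 2 ≤ g z) (hg0 : ∀ z, 0 ≤ g z)
    (hVmeas : Measurable fun p : ℝ × ℝ => V p.1 p.2)
    (hcmeas : Measurable fun p : ℝ × ℝ => c p.1 p.2)
    (hDU : Integrable (fun p : ℝ × ℝ => (dU p.1 p.2) ^ 2)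
      ((volume : Measure ℝ).prod ((volume : Measure ℝ).restrict (Set.Ioi 0))))
    (hV : Integrable (fun p : ℝ × ℝ => (V p.1 p.2) ^ 2)
      ((volume : Measure ℝ).prod ((volume : Measure ℝ).restrict (Set.Ioi 0))))
    (hc : IntegrableOn (fun z => z * g z) (Set.Ioi 0)) :
    |ε ^ (-(1:ℝ)/2) * ∫ x : ℝ, ∫ y in Set.Ioi (0:ℝ), U x y * c x (y / Real.sqrt ε) * V x y| ≤
      Real.sqrt (∫ x : ℝ, ∫ y in Set.Ioi (0:ℝ), (dU x y) ^ 2) *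
      Real.sqrt (∫ x : ℝ, ∫ y in Set.Ioi (0:ℝ), (V x y) ^ 2) *
      Real.sqrt (∫ z in Set.Ioi (0:ℝ), z * g z) := by
  have hs : 0 < Real.sqrt ε := Real.sqrt_pos.mpr hε
  set s := Real.sqrt ε with hs_def
  set D : ℝ → ℝ := fun x => ∫ y in Set.Ioi (0:ℝ), (dU x y) ^ 2 with hD_def
  set B : ℝ → ℝ := fun x => ∫ y in Set.Ioi (0:ℝ), (V x y) ^ 2 with hB_def
  set C : ℝ := ∫ z in Set.Ioi (0:ℝ), z * g z with hC_def
  have hD0 : ∀ x, 0 ≤ D x := fun x => integral_nonneg fun y => sq_nonneg _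
  have hB0 : ∀ x, 0 ≤ B x := fun x => integral_nonneg fun y => sq_nonneg _
  have hC0 : 0 ≤ C := setIntegral_nonneg measurableSet_Ioi fun z hz => mul_nonneg hz.le (hg0 z)
  -- measurability of sections
  have hVx : ∀ x, Measurable fun y => V x y := fun x => hVmeas.comp measurable_prodMk_left
  have hcx : ∀ x, Measurable fun z => c x z := fun x => hcmeas.comp measurable_prodMk_left
  have hdUx : ∀ x, Continuous fun y => dU x y := fun x =>
    hdUcont.comp (continuous_const.prodMk continuous_id)
  -- change of variables for the weight
  have hw : IntegrableOn (fun y => y * g (y / s)) (Set.Ioi 0) := by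
    have := (integrableOn_Ioi_comp_mul_right_iff (fun z => s * (z * g z)) 0
      (inv_pos.mpr hs)).mpr (by simpa [IntegrableOn] using (hc.const_mul s))
    refine this.congr_fun (fun y hy => ?_) measurableSet_Ioi
    rw [div_eq_mul_inv]
    field_simp
  have hWeq : ∫ y in Set.Ioi (0:ℝ), y * g (y / s) = ε * C := by
    have h := MeasureTheory.integral_comp_mul_right_Ioi (fun z => s * (z * g z)) 0
      (inv_pos.mpr hs)
    simp only [zero_mul, smul_eq_mul, inv_inv] at h
    have heq : ∀ y : ℝ, s * (y * s⁻¹ * g (y * s⁻¹)) = y * g (y / s) := by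
      intro y
      rw [div_eq_mul_inv]
      field_simp
    calc ∫ y in Set.Ioi (0:ℝ), y * g (y / s)
        = ∫ y in Set.Ioi (0:ℝ), s * (y * s⁻¹ * g (y * s⁻¹)) := by
          refine setIntegral_congr_fun measurableSet_Ioi fun y _ => (heq y).symm
      _ = s * ∫ z in Set.Ioi (0:ℝ), s * (z * g z) := h
      _ = ε * C := by
          rw [integral_const_mul, ← mul_assoc, Real.mul_self_sqrt hε.le]
  -- Fubini slices
  have hDae : ∀ᵐ x : ℝ, IntegrableOn (fun y => (dU x y) ^ 2) (Set.Ioi 0) := hDU.prod_right_ae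
  have hBae : ∀ᵐ x : ℝ, IntegrableOn (fun y => (V x y) ^ 2) (Set.Ioi 0) := hV.prod_right_ae
  -- pointwise FTC bound
  have hUb : ∀ x : ℝ, IntegrableOn (fun y => (dU x y) ^ 2) (Set.Ioi 0) →
      ∀ y : ℝ, 0 < y → |U x y| ≤ Real.sqrt y * Real.sqrt (D x) := by
    intro x hint y hy
    have hftc : ∫ t in (0:ℝ)..y, dU x t = U x y - U x 0 :=
      intervalIntegral.integral_eq_sub_of_hasDerivAt (fun t _ => hderiv x t)
        ((hdUx x).intervalIntegrable 0 y)
    rw [hU0 x, sub_zero] at hftc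
    have h1 : |U x y| = |∫ t in Set.Ioc (0:ℝ) y, dU x t| := by
      rw [← hftc, intervalIntegral.integral_of_le hy.le]
    have h2 : |∫ t in Set.Ioc (0:ℝ) y, dU x t| ≤ ∫ t in Set.Ioc (0:ℝ) y, |dU x t| := by
      simpa [Real.norm_eq_abs] using norm_integral_le_integral_norm
        (μ := volume.restrict (Set.Ioc 0 y)) (f := fun t => dU x t)
    have hint' : Integrable (fun t => (dU x t) ^ 2) (volume.restrict (Set.Ioc 0 y)) :=
      hint.mono_set Set.Ioc_subset_Ioi_self
    have h3 : ∫ t in Set.Ioc (0:ℝ) y, |dU x t| ≤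
        Real.sqrt (∫ t in Set.Ioc (0:ℝ) y, (dU x t) ^ 2) * Real.sqrt y := by
      have hcs := bve_cs (μ := volume.restrict (Set.Ioc 0 y)) (f := fun t => |dU x t|)
        (g := fun _ => (1:ℝ)) ((hdUx x).measurable.abs.aestronglyMeasurable)
        aestronglyMeasurable_const
        (Filter.Eventually.of_forall fun t => abs_nonneg _)
        (Filter.Eventually.of_forall fun t => zero_le_one)
        (by simpa [sq_abs] using hint')
        (by
          refine ((integrableOn_const_iff (by simp)).mpr (Or.inr ?_)).congr_fun (fun a _ => (one_pow 2).symm) ?_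
          · simp [Real.volume_Ioc]
          · exact measurableSet_Ioc)
      simpa [sq_abs, Real.volume_Ioc, ENNReal.toReal_ofReal hy.le, max_eq_left hy.le] using hcs
    have h4 : ∫ t in Set.Ioc (0:ℝ) y, (dU x t) ^ 2 ≤ D x :=
      setIntegral_mono_set hint (Filter.Eventually.of_forall fun t => sq_nonneg _)
        (HasSubset.Subset.eventuallyLE Set.Ioc_subset_Ioi_self)
    calc |U x y| ≤ Real.sqrt (∫ t in Set.Ioc (0:ℝ) y, (dU x t) ^ 2) * Real.sqrt y := by
          rw [h1]; exact le_trans h2 h3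
      _ ≤ Real.sqrt (D x) * Real.sqrt y := by
          gcongr
      _ = Real.sqrt y * Real.sqrt (D x) := mul_comm _ _
  -- main per-x bound
  have hmain : ∀ᵐ x : ℝ, |∫ y in Set.Ioi (0:ℝ), U x y * c x (y / s) * V x y| ≤
      Real.sqrt (ε * C) * (Real.sqrt (D x) * Real.sqrt (B x)) := by
    filter_upwards [hDae, hBae] with x hDx hBx
    set f : ℝ → ℝ := fun y => Real.sqrt y * |c x (y / s)| with hf_def
    set h : ℝ → ℝ := fun y => |V x y| with hh_def
    have hcxs : Measurable fun y : ℝ => c x (y / s) := (hcx x).comp (measurable_id.div_const s)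
    have hfm : AEStronglyMeasurable f (volume.restrict (Set.Ioi 0)) :=
      (Real.continuous_sqrt.measurable.mul hcxs.abs).aestronglyMeasurable
    have hhm : AEStronglyMeasurable h (volume.restrict (Set.Ioi 0)) :=
      ((hVx x).abs).aestronglyMeasurable
    have hfsq : ∀ y : ℝ, 0 < y → f y ^ 2 = y * (c x (y / s)) ^ 2 := by
      intro y hy
      simp only [hf_def, mul_pow, sq_abs, Real.sq_sqrt hy.le]
    have hf2 : Integrable (fun y => f y ^ 2) (volume.restrict (Set.Ioi 0)) := by
      refine Integrable.mono' hw (hfm.pow 2) ?_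
      filter_upwards [ae_restrict_mem measurableSet_Ioi] with y hy
      rw [Real.norm_eq_abs, abs_of_nonneg (sq_nonneg _), hfsq y hy]
      exact mul_le_mul_of_nonneg_left (hgc x _) hy.le
    have hh2 : Integrable (fun y => h y ^ 2) (volume.restrict (Set.Ioi 0)) := by
      simpa [hh_def, sq_abs, IntegrableOn] using hBx
    have hfh : Integrable (fun y => f y * h y) (volume.restrict (Set.Ioi 0)) :=
      bve_mul_int hfm hhm hf2 hh2
    have hb1 : |∫ y in Set.Ioi (0:ℝ), U x y * c x (y / s) * V x y| ≤
        ∫ y in Set.Ioi (0:ℝ), Real.sqrt (D x) * (f y * h y) := by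
      rw [← Real.norm_eq_abs]
      refine norm_integral_le_of_norm_le (hfh.const_mul _) ?_
      filter_upwards [ae_restrict_mem measurableSet_Ioi] with y hy
      rw [Real.norm_eq_abs, abs_mul, abs_mul]
      calc |U x y| * |c x (y / s)| * |V x y|
          ≤ Real.sqrt y * Real.sqrt (D x) * |c x (y / s)| * |V x y| := by
            gcongr
            exact hUb x hDx y hy
        _ = Real.sqrt (D x) * (f y * h y) := by simp only [hf_def, hh_def]; ring
    have hfint2 : ∫ y in Set.Ioi (0:ℝ), f y ^ 2 ≤ ε * C := by
      rw [← hWeq]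
      refine integral_mono_of_nonneg (Filter.Eventually.of_forall fun y => sq_nonneg _) hw ?_
      filter_upwards [ae_restrict_mem measurableSet_Ioi] with y hy
      rw [hfsq y hy]
      exact mul_le_mul_of_nonneg_left (hgc x _) hy.le
    have hBeq : ∫ y in Set.Ioi (0:ℝ), h y ^ 2 = B x := by
      simp only [hh_def, sq_abs, hB_def]
    calc |∫ y in Set.Ioi (0:ℝ), U x y * c x (y / s) * V x y|
        ≤ ∫ y in Set.Ioi (0:ℝ), Real.sqrt (D x) * (f y * h y) := hb1
      _ = Real.sqrt (D x) * ∫ y in Set.Ioi (0:ℝ), f y * h y := integral_const_mul _ _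
      _ ≤ Real.sqrt (D x) * (Real.sqrt (∫ y in Set.Ioi (0:ℝ), f y ^ 2) *
            Real.sqrt (∫ y in Set.Ioi (0:ℝ), h y ^ 2)) :=
          mul_le_mul_of_nonneg_left
            (bve_cs hfm hhm (Filter.Eventually.of_forall fun y => mul_nonneg (Real.sqrt_nonneg _) (abs_nonneg _))
              (Filter.Eventually.of_forall fun y => abs_nonneg _) hf2 hh2) (Real.sqrt_nonneg _)
      _ ≤ Real.sqrt (D x) * (Real.sqrt (ε * C) * Real.sqrt (B x)) := by
          rw [hBeq]
          gcongr
      _ = Real.sqrt (ε * C) * (Real.sqrt (D x) * Real.sqrt (B x)) := by ring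
  -- outer Cauchy–Schwarz
  have hDint : Integrable D := hDU.integral_prod_left
  have hBint : Integrable B := hV.integral_prod_left
  have hsD : AEStronglyMeasurable (fun x => Real.sqrt (D x)) volume :=
    Real.continuous_sqrt.comp_aestronglyMeasurable hDint.aestronglyMeasurable
  have hsB : AEStronglyMeasurable (fun x => Real.sqrt (B x)) volume :=
    Real.continuous_sqrt.comp_aestronglyMeasurable hBint.aestronglyMeasurable
  have hsD2 : Integrable (fun x => Real.sqrt (D x) ^ 2) :=
    hDint.congr (Filter.Eventually.of_forall fun x => (Real.sq_sqrt (hD0 x)).symm)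
  have hsB2 : Integrable (fun x => Real.sqrt (B x) ^ 2) :=
    hBint.congr (Filter.Eventually.of_forall fun x => (Real.sq_sqrt (hB0 x)).symm)
  have hprod : Integrable (fun x => Real.sqrt (D x) * Real.sqrt (B x)) :=
    bve_mul_int hsD hsB hsD2 hsB2
  have houter : |∫ x : ℝ, ∫ y in Set.Ioi (0:ℝ), U x y * c x (y / s) * V x y| ≤
      ∫ x : ℝ, Real.sqrt (ε * C) * (Real.sqrt (D x) * Real.sqrt (B x)) := by
    rw [← Real.norm_eq_abs]
    exact norm_integral_le_of_norm_le (hprod.const_mul _)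
      (by simpa [Real.norm_eq_abs] using hmain)
  have hcs2 : ∫ x : ℝ, Real.sqrt (D x) * Real.sqrt (B x) ≤
      Real.sqrt (∫ x : ℝ, D x) * Real.sqrt (∫ x : ℝ, B x) := by
    have hcs := bve_cs hsD hsB
      (Filter.Eventually.of_forall fun x => Real.sqrt_nonneg _)
      (Filter.Eventually.of_forall fun x => Real.sqrt_nonneg _) hsD2 hsB2
    have e1 : ∫ x : ℝ, Real.sqrt (D x) ^ 2 = ∫ x : ℝ, D x :=
      integral_congr_ae (Filter.Eventually.of_forall fun x => Real.sq_sqrt (hD0 x))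
    have e2 : ∫ x : ℝ, Real.sqrt (B x) ^ 2 = ∫ x : ℝ, B x :=
      integral_congr_ae (Filter.Eventually.of_forall fun x => Real.sq_sqrt (hB0 x))
    rwa [e1, e2] at hcs
  -- put everything together
  have hre : ε ^ (-(1:ℝ)/2) = s⁻¹ := by
    rw [hs_def, Real.sqrt_eq_rpow, neg_div, Real.rpow_neg hε.le]
  have hre0 : (0:ℝ) ≤ ε ^ (-(1:ℝ)/2) := Real.rpow_nonneg hε.le _
  have hsC : Real.sqrt (ε * C) = s * Real.sqrt C := by
    rw [hs_def, Real.sqrt_mul hε.le]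
  calc |ε ^ (-(1:ℝ)/2) * ∫ x : ℝ, ∫ y in Set.Ioi (0:ℝ), U x y * c x (y / s) * V x y|
      = s⁻¹ * |∫ x : ℝ, ∫ y in Set.Ioi (0:ℝ), U x y * c x (y / s) * V x y| := by
        rw [abs_mul, abs_of_nonneg hre0, hre]
    _ ≤ s⁻¹ * ∫ x : ℝ, Real.sqrt (ε * C) * (Real.sqrt (D x) * Real.sqrt (B x)) :=
        mul_le_mul_of_nonneg_left houter (inv_nonneg.mpr hs.le)
    _ = s⁻¹ * (Real.sqrt (ε * C) * ∫ x : ℝ, Real.sqrt (D x) * Real.sqrt (B x)) := by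
        rw [integral_const_mul]
    _ ≤ s⁻¹ * (Real.sqrt (ε * C) * (Real.sqrt (∫ x : ℝ, D x) * Real.sqrt (∫ x : ℝ, B x))) := by
        gcongr
    _ = Real.sqrt (∫ x : ℝ, D x) * Real.sqrt (∫ x : ℝ, B x) * Real.sqrt C := by
        rw [hsC]
        field_simp

end Aux

/-- Boundary-vanishing trick of estimate (a74)–(a18): if `U(x,0) = 0` and
`∂_y U ∈ L²`, then the singular factor `ε^{-1/2}` in the boundary-layer term is
cancelled by the weight `z^{1/2}` of the profile `c`. -/
theorem boundary_vanishing_estimate (U c V : ℝ → ℝ → ℝ) (ε : ℝ) (hε : 0 < ε)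
    (hU : ContDiff ℝ 1 fun p : ℝ × ℝ => U p.1 p.2)
    (hU0 : ∀ x, U x 0 = 0)
    (hbdd : ∀ z : ℝ, BddAbove (Set.range fun x => (c x z) ^ 2))
    (hVmeas : Measurable fun p : ℝ × ℝ => V p.1 p.2)
    (hcmeas : Measurable fun p : ℝ × ℝ => c p.1 p.2)
    (hDU : Integrable (fun p : ℝ × ℝ => (deriv (fun y => U p.1 y) p.2) ^ 2)
      ((volume : Measure ℝ).prod ((volume : Measure ℝ).restrict (Set.Ioi 0))))
    (hV : Integrable (fun p : ℝ × ℝ => (V p.1 p.2) ^ 2)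
      ((volume : Measure ℝ).prod ((volume : Measure ℝ).restrict (Set.Ioi 0))))
    (hc : IntegrableOn (fun z => z * ⨆ x, (c x z) ^ 2) (Set.Ioi 0)) :
    |ε ^ (-(1:ℝ)/2) * ∫ x : ℝ, ∫ y in Set.Ioi (0:ℝ), U x y * c x (y / Real.sqrt ε) * V x y| ≤
      Real.sqrt (∫ x : ℝ, ∫ y in Set.Ioi (0:ℝ), (deriv (fun y' => U x y') y) ^ 2) *
      Real.sqrt (∫ x : ℝ, ∫ y in Set.Ioi (0:ℝ), (V x y) ^ 2) *
      Real.sqrt (∫ z in Set.Ioi (0:ℝ), z * ⨆ x, (c x z) ^ 2) := by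
  have hUyD : ∀ x y : ℝ, HasDerivAt (fun y' => U x y')
      ((fderiv ℝ (fun p : ℝ × ℝ => U p.1 p.2) (x, y)) ((0 : ℝ), (1 : ℝ))) y := by
    intro x y
    have h1 : HasFDerivAt (fun p : ℝ × ℝ => U p.1 p.2)
        (fderiv ℝ (fun p : ℝ × ℝ => U p.1 p.2) (x, y)) (x, y) :=
      (hU.differentiable one_ne_zero (x, y)).hasFDerivAt
    have h2 : HasDerivAt (fun y' : ℝ => (x, y')) (((0 : ℝ), (1 : ℝ)) : ℝ × ℝ) y :=
      HasDerivAt.prodMk (hasDerivAt_const y x) (hasDerivAt_id y)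
    exact h1.comp_hasDerivAt y h2
  refine bve_aux U c V (fun x y => deriv (fun y' => U x y') y) (fun z => ⨆ x, (c x z) ^ 2) ε hε
    (fun x y => ((hUyD x y).differentiableAt).hasDerivAt) ?_ hU.continuous hU0
    (fun x z => le_ciSup (hbdd z) x) (fun z => le_trans (sq_nonneg (c 0 z)) (le_ciSup (hbdd z) 0))
    hVmeas hcmeas hDU hV hc
  have heq : (fun p : ℝ × ℝ => deriv (fun y' => U p.1 y') p.2)
      = fun p : ℝ × ℝ => (fderiv ℝ (fun q : ℝ × ℝ => U q.1 q.2) p) ((0 : ℝ), (1 : ℝ)) :=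
    funext fun p => (hUyD p.1 p.2).deriv
  rw [heq]
  exact (hU.continuous_fderiv one_ne_zero).clm_apply continuous_const
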